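/- Let a > 0, Omega open connected subset of (0,infinity) x R^k, and u in C^3(Omega) with L_a u = -1. If L_a P_a = 0 in Omega, where P_a = |grad u|^2 + (2/(a+1+k)) u, then there exist y_0 in R^k and gamma in R such that u(r,y) = gamma - (r^2 + |y - y_0|^2)/(2(a+1+k)) for all (r,y) in Omega. -/

import Mathlib

open Set Finset

/-- Partial derivative of `u` in the `i`-th coordinate direction. -/
noncomputable def pd {n : ℕ} (i : Fin n) (u : (Fin n → ℝ) → ℝ) (x : Fin n → ℝ) : ℝ :=
  fderiv ℝ u x (Pi.single i 1)

/-- The Weinstein operator `L_a u = ∂_rr u + (a/r) ∂_r u + Δ_y u` on `ℝ^+ × ℝ^k`,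
where `r = x 0` and `y = (x 1, …, x k)`. -/
noncomputable def weinstein {k : ℕ} (a : ℝ) (u : (Fin (k + 1) → ℝ) → ℝ)
    (x : Fin (k + 1) → ℝ) : ℝ :=
  (∑ i, pd i (pd i u) x) + (a / x 0) * pd 0 u x

namespace PdLemmas
variable {n : ℕ} {f g : (Fin n → ℝ) → ℝ} {x : Fin n → ℝ} {i j : Fin n}

theorem pd_congr {s : Set (Fin n → ℝ)} (hs : IsOpen s) (hx : x ∈ s)
    (h : ∀ z ∈ s, f z = g z) : pd i f x = pd i g x := by
  unfold pd
  rw [Filter.EventuallyEq.fderiv_eq ((hs.eventually_mem hx).mono h)]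

theorem pd_add (hf : DifferentiableAt ℝ f x) (hg : DifferentiableAt ℝ g x) :
    pd i (fun z => f z + g z) x = pd i f x + pd i g x := by
  unfold pd; rw [fderiv_fun_add hf hg]; rfl

theorem pd_const_mul (c : ℝ) (hf : DifferentiableAt ℝ f x) :
    pd i (fun z => c * f z) x = c * pd i f x := by
  unfold pd; rw [fderiv_const_mul hf]; rfl

theorem pd_mul (hf : DifferentiableAt ℝ f x) (hg : DifferentiableAt ℝ g x) :
    pd i (fun z => f z * g z) x = pd i f x * g x + f x * pd i g x := by
  unfold pd; rw [fderiv_fun_mul hf hg]; simp; ring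

theorem pd_sq (hf : DifferentiableAt ℝ f x) :
    pd i (fun z => f z ^ 2) x = 2 * f x * pd i f x := by
  have := pd_mul (i := i) hf hf
  simp only [← sq] at this
  rw [this]; ring

theorem pd_sum {m : ℕ} (F : Fin m → (Fin n → ℝ) → ℝ)
    (hF : ∀ j, DifferentiableAt ℝ (F j) x) :
    pd i (fun z => ∑ j, F j z) x = ∑ j, pd i (F j) x := by
  unfold pd
  rw [fderiv_fun_sum fun j _ => hF j]
  simp

theorem pd_coord : pd i (fun z => z j) x = if j = i then 1 else 0 := by
  have : (fun z : Fin n → ℝ => z j) = (ContinuousLinearMap.proj j : (Fin n → ℝ) →L[ℝ] ℝ) := rfl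
  unfold pd
  rw [this, ContinuousLinearMap.fderiv]
  simp [Pi.single_apply]

theorem pd_const (c : ℝ) : pd i (fun _ => c) x = 0 := by
  unfold pd; simp

theorem pd_mul_const (c : ℝ) (hf : DifferentiableAt ℝ f x) :
    pd i (fun z => f z * c) x = pd i f x * c := by
  unfold pd; rw [fderiv_mul_const hf]; simp; ring

theorem pd_div_const (c : ℝ) (hf : DifferentiableAt ℝ f x) :
    pd i (fun z => f z / c) x = pd i f x / c := by
  simp only [div_eq_mul_inv]
  exact pd_mul_const c⁻¹ hf

theorem diffAt_div_const (c : ℝ) (hf : DifferentiableAt ℝ f x) :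
    DifferentiableAt ℝ (fun z => f z / c) x := by
  simp only [div_eq_mul_inv]
  exact hf.mul_const _

theorem diffAt_a_div_coord {k : ℕ} {x : Fin (k+1) → ℝ} (a : ℝ) (hx : x 0 ≠ 0) :
    DifferentiableAt ℝ (fun z : Fin (k+1) → ℝ => a / z 0) x := by
  have h0 : HasFDerivAt (fun z : Fin (k+1) → ℝ => z 0)
      (ContinuousLinearMap.proj 0 : (Fin (k+1) → ℝ) →L[ℝ] ℝ) x :=
    (ContinuousLinearMap.proj 0 : (Fin (k+1) → ℝ) →L[ℝ] ℝ).hasFDerivAt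
  have hh : HasDerivAt (fun t : ℝ => a / t) (-(a / (x 0) ^ 2)) (x 0) := by
    have := (hasDerivAt_const (x 0) a).div (hasDerivAt_id (x 0)) hx
    convert this using 1
    exacts [rfl, rfl, rfl, by simp [neg_div]]
  have h1 := hh.comp_hasFDerivAt x h0
  have h1' : HasFDerivAt (fun z : Fin (k+1) → ℝ => a / z 0)
      (-(a / (x 0) ^ 2) • (ContinuousLinearMap.proj 0 : (Fin (k+1) → ℝ) →L[ℝ] ℝ)) x := h1
  exact h1'.differentiableAt

theorem pd_sub_const (c : ℝ) :
    pd i (fun z => f z - c) x = pd i f x := by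
  unfold pd; rw [fderiv_sub_const]

theorem contDiffAt_pd {m : ℕ∞} (hf : ContDiffAt ℝ (m + 1) f x) :
    ContDiffAt ℝ m (pd i f) x :=
  (hf.fderiv_right le_rfl).clm_apply contDiffAt_const

theorem contDiffAt_pd2 (hf : ContDiffAt ℝ 3 f x) : ContDiffAt ℝ 2 (pd i f) x :=
  (hf.fderiv_right (by norm_num)).clm_apply contDiffAt_const

theorem contDiffAt_pd1 (hf : ContDiffAt ℝ 2 f x) : ContDiffAt ℝ 1 (pd i f) x :=
  (hf.fderiv_right (by norm_num)).clm_apply contDiffAt_const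

theorem pd_div_coord {k : ℕ} {x : Fin (k+1) → ℝ} (a : ℝ) (hx : x 0 ≠ 0) (i : Fin (k+1)) :
    pd i (fun z => a / z 0) x = (if (0 : Fin (k+1)) = i then 1 else 0) * (-(a / (x 0) ^ 2)) := by
  have h0 : HasFDerivAt (fun z : Fin (k+1) → ℝ => z 0)
      (ContinuousLinearMap.proj 0 : (Fin (k+1) → ℝ) →L[ℝ] ℝ) x :=
    (ContinuousLinearMap.proj 0 : (Fin (k+1) → ℝ) →L[ℝ] ℝ).hasFDerivAt
  have hh : HasDerivAt (fun t : ℝ => a / t) (-(a / (x 0) ^ 2)) (x 0) := by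
    have := (hasDerivAt_const (x 0) a).div (hasDerivAt_id (x 0)) hx
    convert this using 1
    exacts [rfl, rfl, rfl, by simp [neg_div]]
  have h1 := hh.comp_hasFDerivAt x h0
  have h1' : HasFDerivAt (fun z : Fin (k+1) → ℝ => a / z 0)
      (-(a / (x 0) ^ 2) • (ContinuousLinearMap.proj 0 : (Fin (k+1) → ℝ) →L[ℝ] ℝ)) x := h1
  unfold pd
  rw [h1'.fderiv]
  simp [Pi.single_apply, eq_comm]
  split_ifs <;> simp

theorem pd_pd_eq_sndFDeriv (hf : ContDiffAt ℝ 2 f x) :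
    pd i (pd j f) x = fderiv ℝ (fderiv ℝ f) x (Pi.single i 1) (Pi.single j 1) := by
  have hd : DifferentiableAt ℝ (fderiv ℝ f) x := by
    have : ContDiffAt ℝ 1 (fderiv ℝ f) x := hf.fderiv_right (by norm_num)
    exact this.differentiableAt (by norm_num)
  have h := hd.hasFDerivAt.clm_apply (hasFDerivAt_const (Pi.single j 1 : Fin n → ℝ) x)
  unfold pd
  rw [h.fderiv]
  simp

theorem pd_pd_symm (hf : ContDiffAt ℝ 2 f x) :
    pd i (pd j f) x = pd j (pd i f) x := by
  rw [pd_pd_eq_sndFDeriv hf, pd_pd_eq_sndFDeriv hf]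
  exact (hf.isSymmSndFDerivAt (by norm_num) _ _).symm

theorem clm_eq_zero (L : (Fin n → ℝ) →L[ℝ] ℝ) (h : ∀ i, L (Pi.single i 1) = 0) : L = 0 := by
  ext w
  have hw : w = ∑ i, (w i) • (Pi.single i 1 : Fin n → ℝ) := by
    rw [← Finset.univ_sum_single w]
    congr 1; ext i j
    simp [Pi.single_apply]
  rw [hw]
  simp [h]

theorem fderiv_eq_zero_of_pd (h : ∀ i, pd i f x = 0) : fderiv ℝ f x = 0 :=
  clm_eq_zero _ h

theorem eqOn_const_of_pd_zero {s : Set (Fin n → ℝ)} (hs : IsOpen s) (hc : IsPreconnected s)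
    (hf : ∀ z ∈ s, DifferentiableAt ℝ f z) (h : ∀ z ∈ s, ∀ i, pd i f z = 0)
    {x y : Fin n → ℝ} (hx : x ∈ s) (hy : y ∈ s) : f x = f y := by
  have key : ∀ z ∈ s, ∃ ε > 0, Metric.ball z ε ⊆ s ∧ ∀ w ∈ Metric.ball z ε, f w = f z := by
    intro z hz
    obtain ⟨ε, hε, hball⟩ := Metric.isOpen_iff.1 hs z hz
    refine ⟨ε, hε, hball, fun w hw => ?_⟩
    exact (convex_ball z ε).is_const_of_fderivWithin_eq_zero
      (fun p hp => (hf p (hball hp)).differentiableWithinAt)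
      (fun p hp => by
        rw [fderivWithin_of_isOpen Metric.isOpen_ball hp]
        exact fderiv_eq_zero_of_pd (h p (hball hp)))
      hw (Metric.mem_ball_self hε)
  by_contra hne
  set t : Set (Fin n → ℝ) := {z | z ∈ s ∧ f z = f x} with ht
  set u : Set (Fin n → ℝ) := {z | z ∈ s ∧ f z ≠ f x} with hu
  have hto : IsOpen t := by
    rw [Metric.isOpen_iff]
    rintro z ⟨hzs, hzf⟩
    obtain ⟨ε, hε, hb, hconst⟩ := key z hzs
    exact ⟨ε, hε, fun w hw => ⟨hb hw, (hconst w hw).trans hzf⟩⟩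
  have huo : IsOpen u := by
    rw [Metric.isOpen_iff]
    rintro z ⟨hzs, hzf⟩
    obtain ⟨ε, hε, hb, hconst⟩ := key z hzs
    exact ⟨ε, hε, fun w hw => ⟨hb hw, by rw [hconst w hw]; exact hzf⟩⟩
  obtain ⟨p, hps, hpt, hpu⟩ := hc t u hto huo (fun z hz => by
      by_cases hfz : f z = f x
      · exact Or.inl ⟨hz, hfz⟩
      · exact Or.inr ⟨hz, hfz⟩)
    ⟨x, hx, hx, rfl⟩ ⟨y, hy, hy, fun hh => hne hh.symm⟩
  exact hpu.2 hpt.2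

theorem algebra_key (a s q : ℝ) (H : Fin n → Fin n → ℝ) (ha : 0 < a)
    (hs : s = n + a)
    (E2 : (∑ i, H i i) + a * q = -1)
    (E1 : (∑ i, ∑ j, (H i j)^2) + a * q^2 = 1/s) :
    (∀ i j, H i j = if i = j then -(1/s) else 0) ∧ q = -(1/s) := by
  have hs0 : 0 < s := by
    rw [hs]; positivity
  have hsne : s ≠ 0 := ne_of_gt hs0
  have key : (∑ i, ∑ j, (if i = j then (H i j + 1/s)^2 else (H i j)^2)) + a * (q + 1/s)^2 = 0 := by
    have hrow : ∀ i : Fin n, (∑ j, (if i = j then (H i j + 1/s)^2 else (H i j)^2))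
        = (∑ j, (H i j)^2) + (2/s * H i i + 1/s^2) := by
      intro i
      have h1 : ∀ j : Fin n, (if i = j then (H i j + 1/s)^2 else (H i j)^2)
          = (H i j)^2 + (if i = j then 2/s * H i j + 1/s^2 else 0) := by
        intro j; split_ifs <;> ring
      rw [Finset.sum_congr rfl fun j _ => h1 j, Finset.sum_add_distrib,
        Finset.sum_ite_eq univ i (fun j => 2/s * H i j + 1/s^2)]
      simp
    rw [Finset.sum_congr rfl fun i _ => hrow i, Finset.sum_add_distrib]
    have hcard : ∑ _i : Fin n, (1:ℝ)/s^2 = n / s^2 := by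
      rw [Finset.sum_const]; simp [Finset.card_univ]; ring
    have expand : (∑ i : Fin n, (2/s * H i i + 1/s^2)) = 2/s * (∑ i, H i i) + n/s^2 := by
      rw [Finset.sum_add_distrib, ← Finset.mul_sum, hcard]
    rw [expand]
    have hsum : (∑ i, H i i) = -1 - a * q := by linarith
    have hsum2 : (∑ i, ∑ j, (H i j)^2) = 1/s - a * q^2 := by linarith
    rw [hsum, hsum2, hs]
    field_simp
    ring
  have hnonneg : ∀ i ∈ (univ : Finset (Fin n)),
      0 ≤ ∑ j, (if i = j then (H i j + 1/s)^2 else (H i j)^2) := by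
    intro i _
    apply Finset.sum_nonneg
    intro j _; split_ifs <;> positivity
  have hq2 : 0 ≤ a * (q + 1/s)^2 := by positivity
  have hsum0 : (∑ i, ∑ j, (if i = j then (H i j + 1/s)^2 else (H i j)^2)) = 0 := by
    have h1 : (∑ i, ∑ j, (if i = j then (H i j + 1/s)^2 else (H i j)^2)) ≤ 0 := by linarith
    have h2 : 0 ≤ (∑ i, ∑ j, (if i = j then (H i j + 1/s)^2 else (H i j)^2)) :=
      Finset.sum_nonneg hnonneg
    linarith
  have hq0 : a * (q + 1/s)^2 = 0 := by linarith
  constructor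
  · intro i j
    have hi := (Finset.sum_eq_zero_iff_of_nonneg hnonneg).1 hsum0 i (mem_univ i)
    have hj := (Finset.sum_eq_zero_iff_of_nonneg (fun j _ => by split_ifs <;> positivity)).1 hi j
      (mem_univ j)
    by_cases hij : i = j
    · simp only [hij, if_true] at hj ⊢
      have := pow_eq_zero_iff (n := 2) (by norm_num) |>.1 hj
      linarith
    · simp only [hij, if_false] at hj ⊢
      exact pow_eq_zero_iff (n := 2) (by norm_num) |>.1 hj
  · have : (q + 1/s)^2 = 0 := by
      rcases mul_eq_zero.1 hq0 with h | h
      · exact absurd h (ne_of_gt ha)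
      · exact h
    have := pow_eq_zero_iff (n := 2) (by norm_num) |>.1 this
    linarith

theorem algebra_E1 (c a r : ℝ) (v : Fin n → ℝ) (H T : Fin n → Fin n → ℝ) (e0 : Fin n)
    (hPx : (∑ i, ((∑ j, ((2 * H i j) * H i j + (2 * v j) * T i j)) + c * H i i))
        + (a / r) * ((∑ j, (2 * v j) * H e0 j) + c * v e0) = 0)
    (hA : ∀ j, (∑ i, T i j) + (a / r) * H e0 j
        = (if e0 = j then 1 else 0) * (a / r ^ 2) * v e0)
    (heqx : (∑ i, H i i) + (a / r) * v e0 = -1) :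
    (∑ i, ∑ j, (H i j) ^ 2) + a * (v e0 / r) ^ 2 = c / 2 := by
  have split1 : (∑ i, ((∑ j, ((2 * H i j) * H i j + (2 * v j) * T i j)) + c * H i i))
      = (∑ i, ∑ j, (2 * H i j) * H i j) + (∑ i, ∑ j, (2 * v j) * T i j)
        + c * (∑ i, H i i) := by
    rw [Finset.sum_add_distrib, Finset.mul_sum]
    congr 1
    rw [← Finset.sum_add_distrib]
    exact Finset.sum_congr rfl fun i _ => by rw [Finset.sum_add_distrib]
  have swap : (∑ i, ∑ j, (2 * v j) * T i j) = ∑ j, (2 * v j) * (∑ i, T i j) := by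
    rw [Finset.sum_comm]
    exact Finset.sum_congr rfl fun j _ => by rw [Finset.mul_sum]
  have subst : (∑ j, (2 * v j) * (∑ i, T i j))
      = (2 * v e0) * ((a / r ^ 2) * v e0) - (a / r) * (∑ j, (2 * v j) * H e0 j) := by
    have h1 : ∀ j, (2 * v j) * (∑ i, T i j)
        = (if e0 = j then (2 * v j) * ((a / r ^ 2) * v e0) else 0)
          - (2 * v j) * ((a / r) * H e0 j) := by
      intro j
      have := hA j
      have h2 : (∑ i, T i j) = (if e0 = j then 1 else 0) * (a / r ^ 2) * v e0
          - (a / r) * H e0 j := by linarith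
      rw [h2]
      split_ifs <;> ring
    rw [Finset.sum_congr rfl fun j _ => h1 j, Finset.sum_sub_distrib,
      Finset.sum_ite_eq univ e0 (fun j => (2 * v j) * ((a / r ^ 2) * v e0))]
    simp only [Finset.mem_univ, if_true]
    congr 1
    rw [Finset.mul_sum]
    exact Finset.sum_congr rfl fun j _ => by ring
  have sq : (∑ i, ∑ j, (2 * H i j) * H i j) = 2 * ∑ i, ∑ j, (H i j) ^ 2 := by
    rw [Finset.mul_sum]
    refine Finset.sum_congr rfl fun i _ => ?_
    rw [Finset.mul_sum]
    exact Finset.sum_congr rfl fun j _ => by ring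
  rw [split1, swap, subst, sq] at hPx
  have hr2 : (2 * v e0) * ((a / r ^ 2) * v e0) = 2 * (a * (v e0 / r) ^ 2) := by
    field_simp
  rw [hr2] at hPx
  linear_combination hPx / 2 - c / 2 * heqx

end PdLemmas

open PdLemmas

theorem stmt_7 (a : ℝ) (ha : 0 < a) (k : ℕ)
    (Ω : Set (Fin (k + 1) → ℝ)) (hΩopen : IsOpen Ω) (hΩconn : IsConnected Ω)
    (hΩ : Ω ⊆ {x : Fin (k + 1) → ℝ | 0 < x 0})
    (u : (Fin (k + 1) → ℝ) → ℝ) (hu : ContDiffOn ℝ 3 u Ω)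
    (heq : ∀ x ∈ Ω, weinstein a u x = -1)
    (hP : ∀ x ∈ Ω,
      weinstein a (fun z => (∑ i, (pd i u z) ^ 2) + (2 / (a + 1 + k)) * u z) x = 0) :
    ∃ (y₀ : Fin k → ℝ) (γ : ℝ), ∀ x ∈ Ω,
      u x = γ - ((x 0) ^ 2 + ∑ i : Fin k, (x i.succ - y₀ i) ^ 2) / (2 * (a + 1 + k)) := by
  classical
  obtain ⟨x₀, hx₀⟩ := hΩconn.nonempty
  have hk0 : (0:ℝ) ≤ (k:ℝ) := Nat.cast_nonneg k
  have hs0 : 0 < a + 1 + (k:ℝ) := by linarith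
  have hsne : a + 1 + (k:ℝ) ≠ 0 := ne_of_gt hs0
  have hx0 : ∀ x ∈ Ω, x 0 ≠ 0 := fun x hx => ne_of_gt (hΩ hx)
  have hCu : ∀ x ∈ Ω, ContDiffAt ℝ 3 u x := fun x hx => hu.contDiffAt (hΩopen.mem_nhds hx)
  have hCv : ∀ x ∈ Ω, ∀ j, ContDiffAt ℝ 2 (pd j u) x := fun x hx j => contDiffAt_pd2 (hCu x hx)
  have hCw : ∀ x ∈ Ω, ∀ i j, ContDiffAt ℝ 1 (pd i (pd j u)) x :=
    fun x hx i j => contDiffAt_pd1 (hCv x hx j)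
  have du : ∀ x ∈ Ω, DifferentiableAt ℝ u x :=
    fun x hx => (hCu x hx).differentiableAt (by norm_num)
  have dv : ∀ x ∈ Ω, ∀ j, DifferentiableAt ℝ (pd j u) x :=
    fun x hx j => (hCv x hx j).differentiableAt (by norm_num)
  have dw : ∀ x ∈ Ω, ∀ i j, DifferentiableAt ℝ (pd i (pd j u)) x :=
    fun x hx i j => (hCw x hx i j).differentiableAt (by norm_num)
  have dcoord : ∀ (x : Fin (k+1) → ℝ) (j : Fin (k+1)),
      DifferentiableAt ℝ (fun z : Fin (k+1) → ℝ => z j) x :=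
    fun x j => (ContinuousLinearMap.proj j : (Fin (k+1) → ℝ) →L[ℝ] ℝ).differentiableAt
  have ddiv : ∀ x ∈ Ω, DifferentiableAt ℝ (fun z : Fin (k+1) → ℝ => a / z 0) x := by
    intro x hx
    exact diffAt_a_div_coord a (hx0 x hx)
  have hsymm : ∀ x ∈ Ω, ∀ i j, pd i (pd j u) x = pd j (pd i u) x :=
    fun x hx i j => pd_pd_symm ((hCu x hx).of_le (by norm_num))
  have hswap3 : ∀ x ∈ Ω, ∀ m i, pd m (pd i (pd i u)) x = pd i (pd i (pd m u)) x := by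
    intro x hx m i
    rw [pd_pd_symm (hCv x hx i)]
    exact pd_congr hΩopen hx fun z hz => hsymm z hz m i
  -- Step A: differentiated PDE
  have hA : ∀ x ∈ Ω, ∀ m, (∑ i, pd i (pd i (pd m u)) x) + (a / x 0) * pd 0 (pd m u) x
      = (if (0 : Fin (k+1)) = m then 1 else 0) * (a / (x 0)^2) * pd 0 u x := by
    intro x hx m
    have h0 : pd m (fun z => (∑ i, pd i (pd i u) z) + (a / z 0) * pd 0 u z) x = 0 := by
      have hcongr := pd_congr (i := m) hΩopen hx
        (f := fun z => (∑ i, pd i (pd i u) z) + (a / z 0) * pd 0 u z)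
        (g := fun _ => (-1:ℝ)) (fun z hz => heq z hz)
      rw [hcongr, pd_const]
    have hd1 : DifferentiableAt ℝ (fun z => ∑ i, pd i (pd i u) z) x :=
      DifferentiableAt.fun_sum fun i _ => dw x hx i i
    have hd2 : DifferentiableAt ℝ (fun z => (a / z 0) * pd 0 u z) x :=
      (ddiv x hx).mul (dv x hx 0)
    rw [pd_add hd1 hd2, pd_sum _ (fun i => dw x hx i i),
      pd_mul (ddiv x hx) (dv x hx 0), pd_div_coord a (hx0 x hx) m,
      Finset.sum_congr rfl (fun i _ => hswap3 x hx m i),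
      hsymm x hx m 0] at h0
    linear_combination h0
  -- E2 at each point
  have E2 : ∀ x ∈ Ω, (∑ i, pd i (pd i u) x) + (a / x 0) * pd 0 u x = -1 :=
    fun x hx => heq x hx
  -- first derivative of P
  have hPd : ∀ x ∈ Ω, ∀ i, pd i (fun z => (∑ j, (pd j u z) ^ 2) + 2 / (a + 1 + k) * u z) x
      = (∑ j, (2 * pd j u x) * pd i (pd j u) x) + 2 / (a + 1 + k) * pd i u x := by
    intro x hx i
    have hdsum : DifferentiableAt ℝ (fun z => ∑ j, (pd j u z) ^ 2) x :=
      DifferentiableAt.fun_sum fun j _ => (dv x hx j).pow 2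
    have hdc : DifferentiableAt ℝ (fun z => 2 / (a + 1 + k) * u z) x :=
      (du x hx).const_mul _
    rw [pd_add hdsum hdc, pd_sum _ (fun j => (dv x hx j).fun_pow 2), pd_const_mul _ (du x hx)]
    congr 1
    exact Finset.sum_congr rfl fun j _ => by rw [pd_sq (dv x hx j)]
  -- second derivative of P
  have hQ : ∀ x ∈ Ω, ∀ i,
      pd i (pd i (fun z => (∑ j, (pd j u z) ^ 2) + 2 / (a + 1 + k) * u z)) x
      = (∑ j, ((2 * pd i (pd j u) x) * pd i (pd j u) x
          + (2 * pd j u x) * pd i (pd i (pd j u)) x))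
        + 2 / (a + 1 + k) * pd i (pd i u) x := by
    intro x hx i
    have h1 : pd i (pd i (fun z => (∑ j, (pd j u z) ^ 2) + 2 / (a + 1 + k) * u z)) x
        = pd i (fun z => (∑ j, (2 * pd j u z) * pd i (pd j u) z)
            + 2 / (a + 1 + k) * pd i u z) x :=
      pd_congr hΩopen hx (fun z hz => hPd z hz i)
    rw [h1]
    have hd1 : DifferentiableAt ℝ (fun z => ∑ j, (2 * pd j u z) * pd i (pd j u) z) x :=
      DifferentiableAt.fun_sum fun j _ => ((dv x hx j).const_mul 2).mul (dw x hx i j)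
    have hd2 : DifferentiableAt ℝ (fun z => 2 / (a + 1 + k) * pd i u z) x :=
      (dv x hx i).const_mul _
    rw [pd_add hd1 hd2, pd_sum _ (fun j => ((dv x hx j).const_mul 2).fun_mul (dw x hx i j)),
      pd_const_mul _ (dv x hx i)]
    congr 1
    refine Finset.sum_congr rfl fun j _ => ?_
    rw [pd_mul ((dv x hx j).const_mul 2) (dw x hx i j), pd_const_mul 2 (dv x hx j)]
  -- E1 at each point
  have E1 : ∀ x ∈ Ω, (∑ i, ∑ j, (pd i (pd j u) x) ^ 2) + a * (pd 0 u x / x 0) ^ 2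
      = (2 / (a + 1 + k)) / 2 := by
    intro x hx
    have hPx := hP x hx
    unfold weinstein at hPx
    rw [Finset.sum_congr rfl (fun i _ => hQ x hx i), hPd x hx 0] at hPx
    exact algebra_E1 (2 / (a + 1 + k)) a (x 0) (fun j => pd j u x)
      (fun i j => pd i (pd j u) x) (fun i j => pd i (pd i (pd j u)) x) 0
      hPx (fun j => hA x hx j) (E2 x hx)
  -- equality case
  have hHess : ∀ x ∈ Ω,
      (∀ i j, pd i (pd j u) x = if i = j then -(1/(a + 1 + (k:ℝ))) else 0)
      ∧ pd 0 u x / x 0 = -(1/(a + 1 + (k:ℝ))) := by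
    intro x hx
    apply algebra_key a (a + 1 + (k:ℝ)) (pd 0 u x / x 0) (fun i j => pd i (pd j u) x) ha
    · push_cast
      ring
    · linear_combination E2 x hx
    · have h := E1 x hx
      linear_combination h
  -- pd 0 u pointwise
  have hv0 : ∀ x ∈ Ω, pd 0 u x = -(1/(a + 1 + (k:ℝ))) * x 0 := by
    intro x hx
    have hq := (hHess x hx).2
    rw [div_eq_iff (hx0 x hx)] at hq
    exact hq
  -- constancy of pd j u + x j / s
  have hconstj : ∀ (j : Fin (k+1)), ∀ x ∈ Ω,
      pd j u x + 1/(a + 1 + (k:ℝ)) * x j = pd j u x₀ + 1/(a + 1 + (k:ℝ)) * x₀ j := by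
    intro j x hx
    exact eqOn_const_of_pd_zero (f := fun z => pd j u z + 1/(a + 1 + (k:ℝ)) * z j)
      hΩopen hΩconn.isPreconnected
      (fun z hz => (dv z hz j).add ((dcoord z j).const_mul _))
      (fun z hz i => by
        rw [pd_add (dv z hz j) ((dcoord z j).const_mul _), pd_const_mul _ (dcoord z j),
          pd_coord, (hHess z hz).1 i j]
        by_cases hij : i = j
        · subst hij; simp
        · rw [if_neg hij, if_neg (fun hji => hij hji.symm)]; ring)
      hx hx₀
  -- define y₀
  set y₀ : Fin k → ℝ :=
    fun i => (a + 1 + (k:ℝ)) * (pd i.succ u x₀ + 1/(a + 1 + (k:ℝ)) * x₀ i.succ) with hy₀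
  -- gradient formula
  have hgrad : ∀ x ∈ Ω, ∀ i : Fin k,
      pd i.succ u x = -(1/(a + 1 + (k:ℝ))) * (x i.succ - y₀ i) := by
    intro x hx i
    have h := hconstj i.succ x hx
    have h2 : pd i.succ u x = pd i.succ u x₀ + 1/(a + 1 + (k:ℝ)) * x₀ i.succ
        - 1/(a + 1 + (k:ℝ)) * x i.succ := by linarith
    rw [h2, hy₀]
    field_simp
    ring
  -- final function is constant
  refine ⟨y₀, u x₀ + ((x₀ 0) ^ 2 + ∑ i : Fin k, (x₀ i.succ - y₀ i) ^ 2) / (2 * (a + 1 + k)), ?_⟩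
  intro x hx
  have hF : (fun z => u z + ((z 0) ^ 2 + ∑ i : Fin k, (z i.succ - y₀ i) ^ 2) / (2 * (a + 1 + k))) x
      = (fun z => u z + ((z 0) ^ 2 + ∑ i : Fin k, (z i.succ - y₀ i) ^ 2) / (2 * (a + 1 + k))) x₀ := by
    refine eqOn_const_of_pd_zero (f := fun z =>
        u z + ((z 0) ^ 2 + ∑ i : Fin k, (z i.succ - y₀ i) ^ 2) / (2 * (a + 1 + k)))
        hΩopen hΩconn.isPreconnected ?_ ?_ hx hx₀
    · intro z hz
      exact (du z hz).add (diffAt_div_const _ (((dcoord z 0).pow 2).add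
        (DifferentiableAt.fun_sum fun i _ => ((dcoord z i.succ).sub_const (y₀ i)).pow 2)))
    · intro z hz m
      have hdz : DifferentiableAt ℝ
          (fun w : Fin (k+1) → ℝ => (w 0) ^ 2 + ∑ i : Fin k, (w i.succ - y₀ i) ^ 2) z :=
        ((dcoord z 0).pow 2).add
          (DifferentiableAt.fun_sum fun i _ => ((dcoord z i.succ).sub_const (y₀ i)).pow 2)
      rw [pd_add (du z hz) (diffAt_div_const _ hdz), pd_div_const _ hdz,
        pd_add ((dcoord z 0).fun_pow 2)
          (DifferentiableAt.fun_sum fun i _ => ((dcoord z i.succ).sub_const (y₀ i)).fun_pow 2),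
        pd_sq (dcoord z 0), pd_coord,
        pd_sum _ (fun i => ((dcoord z i.succ).sub_const (y₀ i)).fun_pow 2)]
      have hterm : ∀ i : Fin k,
          pd m (fun w : Fin (k+1) → ℝ => (w i.succ - y₀ i) ^ 2) z
          = 2 * (z i.succ - y₀ i) * (if i.succ = m then 1 else 0) := by
        intro i
        rw [pd_sq ((dcoord z i.succ).sub_const (y₀ i)), pd_sub_const, pd_coord]
      rw [Finset.sum_congr rfl fun i _ => hterm i]
      induction m using Fin.cases with
      | zero =>
        have hsz : (∑ i : Fin k, 2 * (z i.succ - y₀ i)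
            * (if i.succ = (0 : Fin (k+1)) then 1 else 0)) = 0 := by
          apply Finset.sum_eq_zero
          intro i _
          rw [if_neg (Fin.succ_ne_zero i)]
          ring
        rw [hsz, hv0 z hz, if_pos rfl]
        field_simp
        ring
      | succ i0 =>
        have hij : ∀ i : Fin k, (2 * (z i.succ - y₀ i) * (if i.succ = i0.succ then 1 else 0))
            = if i = i0 then 2 * (z i.succ - y₀ i) else 0 := by
          intro i
          by_cases h : i = i0
          · subst h; simp
          · rw [if_neg (fun hc => h (Fin.succ_injective _ hc)), if_neg h]; ring
        rw [Finset.sum_congr rfl fun i _ => hij i,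
          Finset.sum_ite_eq' univ i0 (fun i => 2 * (z i.succ - y₀ i))]
        simp only [Finset.mem_univ, if_true]
        rw [if_neg (Ne.symm (Fin.succ_ne_zero i0)), hgrad z hz i0]
        field_simp
        ring
  simp only at hF
  linarith [hF]
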